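/- Let |ψ⟩ be a bipartite pure state, {M^A_{a|x}}, {M^B_{b|y}} POVMs satisfying M^B_{a|k} = (M^A_{a|k})* for all a, k, such that the correlation P(a,b|x,y) = ⟨ψ| M^A_{a|x} ⊗ M^B_{b|y} |ψ⟩ is symmetric (P(a,b|x,y) = P(b,a|y,x)), and suppose the operators {M^A_{a|x}}_{a,x} span the full space of operators on the local Hilbert space. Then S|ψ⟩ = e^{iθ}|ψ*⟩ for some phase θ ∈ [0, 2π), where S is the swap operator and * is complex conjugation. -/

import Mathlib

open Matrix Kronecker ComplexOrder

lemma mapstar_mem_span {n : Type*} (S : Set (Matrix n n ℂ))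
    {Z : Matrix n n ℂ} (hZ : Z ∈ Submodule.span ℂ S) :
    Z.map (starRingEnd ℂ) ∈ Submodule.span ℂ ((fun M => M.map (starRingEnd ℂ)) '' S) := by
  induction hZ using Submodule.span_induction with
  | mem x hx => exact Submodule.subset_span ⟨x, hx, rfl⟩
  | zero => simpa using Submodule.zero_mem _
  | add x y _ _ hx hy =>
      have : (x + y).map (starRingEnd ℂ) = x.map (starRingEnd ℂ) + y.map (starRingEnd ℂ) := by
        ext i j; simp [Matrix.map_apply]
      rw [this]
      exact Submodule.add_mem _ hx hy
  | smul c x _ hx =>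
      have : (c • x).map (starRingEnd ℂ) = (starRingEnd ℂ c) • x.map (starRingEnd ℂ) := by
        ext i j; simp [Matrix.map_apply]
      rw [this]
      exact Submodule.smul_mem _ _ hx

lemma kron_mem_span {m n : Type*} (S : Set (Matrix m m ℂ)) (T : Set (Matrix n n ℂ))
    {M : Matrix m m ℂ} {N : Matrix n n ℂ}
    (hM : M ∈ Submodule.span ℂ S) (hN : N ∈ Submodule.span ℂ T) :
    M ⊗ₖ N ∈ Submodule.span ℂ (Set.image2 (· ⊗ₖ ·) S T) := by
  induction hM using Submodule.span_induction with
  | mem x hx =>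
      induction hN using Submodule.span_induction with
      | mem y hy => exact Submodule.subset_span ⟨x, hx, y, hy, rfl⟩
      | zero => simpa [Matrix.kronecker_zero] using Submodule.zero_mem _
      | add y z _ _ hy hz =>
          rw [Matrix.kronecker_add]
          exact Submodule.add_mem _ hy hz
      | smul c y _ hy =>
          rw [Matrix.kronecker_smul]
          exact Submodule.smul_mem _ _ hy
  | zero => simpa [Matrix.zero_kronecker] using Submodule.zero_mem _
  | add x y _ _ hx hy =>
      rw [Matrix.add_kronecker]
      exact Submodule.add_mem _ hx hy
  | smul c x _ hx =>
      rw [Matrix.smul_kronecker]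
      exact Submodule.smul_mem _ _ hx

lemma stdBasis_kron {m n : Type*} [DecidableEq m] [DecidableEq n]
    (i k : m) (j l : n) :
    single (i,j) (k,l) (1:ℂ) = single i k 1 ⊗ₖ single j l 1 := by
  ext ⟨a,b⟩ ⟨c,e⟩
  simp [Matrix.single, kroneckerMap_apply, Prod.ext_iff, ite_and]
  aesop

/-- quadratic form `H ↦ v† H v` as a linear map in `H`. -/
noncomputable def qf {n : Type*} [Fintype n] (v : n → ℂ) : Matrix n n ℂ →ₗ[ℂ] ℂ where
  toFun H := star v ⬝ᵥ (H *ᵥ v)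
  map_add' H K := by simp [Matrix.add_mulVec, dotProduct_add]
  map_smul' c H := by simp [Matrix.smul_mulVec, dotProduct_smul]

lemma kron_span_top {d : ℕ} (S T : Set (Matrix (Fin d) (Fin d) ℂ))
    (hS : Submodule.span ℂ S = ⊤) (hT : Submodule.span ℂ T = ⊤) :
    Submodule.span ℂ (Set.image2 (· ⊗ₖ ·) S T) = ⊤ := by
  rw [eq_top_iff]
  intro H _
  rw [matrix_eq_sum_single H]
  refine Submodule.sum_mem _ fun p _ => Submodule.sum_mem _ fun q _ => ?_
  obtain ⟨i, j⟩ := p; obtain ⟨k, l⟩ := q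
  have h1 : single (i,j) (k,l) (H (i,j) (k,l)) =
      H (i,j) (k,l) • single (i,j) (k,l) (1:ℂ) := by
    ext a b; simp [Matrix.single]
  rw [h1, stdBasis_kron]
  refine Submodule.smul_mem _ _ (kron_mem_span S T ?_ ?_)
  · rw [hS]; trivial
  · rw [hT]; trivial

theorem symmetric_correlation_forces_swap_conj
    {d : ℕ} {A X : Type*} [Fintype A] [Fintype X]
    (ψ : (Fin d × Fin d) → ℂ)
    (hψ : star ψ ⬝ᵥ ψ = 1)
    (MA MB : A → X → Matrix (Fin d) (Fin d) ℂ)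
    (hpos : ∀ a x, (MA a x).PosSemidef)
    (hsum : ∀ x, ∑ a, MA a x = 1)
    (hconj : ∀ a x, MB a x = (MA a x).map (starRingEnd ℂ))
    (hspan : Submodule.span ℂ (Set.range fun p : A × X => MA p.1 p.2) = ⊤)
    (hsym : ∀ (a b : A) (x y : X),
      star ψ ⬝ᵥ ((MA a x ⊗ₖ MB b y) *ᵥ ψ) = star ψ ⬝ᵥ ((MA b y ⊗ₖ MB a x) *ᵥ ψ)) :
    ∃ θ : ℝ, θ ∈ Set.Ico 0 (2 * Real.pi) ∧
      ∀ i j : Fin d, ψ (j, i) = Complex.exp ((θ : ℂ) * Complex.I) * star (ψ (i, j)) := by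
  classical
  set v : (Fin d × Fin d) → ℂ := fun p => star (ψ p) with hv
  set w : (Fin d × Fin d) → ℂ := fun p => ψ (p.2, p.1) with hw
  set S : Set (Matrix (Fin d) (Fin d) ℂ) := Set.range fun p : A × X => MA p.1 p.2 with hSdef
  set S' : Set (Matrix (Fin d) (Fin d) ℂ) := (fun M => M.map (starRingEnd ℂ)) '' S with hS'def
  -- the linear functional L
  set L : Matrix (Fin d × Fin d) (Fin d × Fin d) ℂ →ₗ[ℂ] ℂ := qf v - qf w with hL
  -- Step 1: L vanishes on the kron products
  have step1 : ∀ H ∈ Set.image2 (· ⊗ₖ ·) S' S, L H = 0 := by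
    rintro _ ⟨_, ⟨_, ⟨⟨a, x⟩, rfl⟩, rfl⟩, _, ⟨⟨b, y⟩, rfl⟩, rfl⟩
    have hMh : ∀ i k, star (MA a x k i) = MA a x i k := fun i k =>
      (hpos a x).isHermitian.apply i k
    have hNh : ∀ j l, star (MA b y l j) = MA b y j l := fun j l =>
      (hpos b y).isHermitian.apply j l
    -- the w part equals P b a y x
    have hwpart : star w ⬝ᵥ (((MA a x).map (starRingEnd ℂ) ⊗ₖ MA b y) *ᵥ w)
        = star ψ ⬝ᵥ ((MA b y ⊗ₖ MB a x) *ᵥ ψ) := by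
      simp only [dotProduct, mulVec, kroneckerMap_apply, hconj, Matrix.map_apply, hw,
        Pi.star_apply, Finset.mul_sum, Complex.star_def]
      refine Fintype.sum_equiv (Equiv.prodComm _ _) _ _ fun p => ?_
      refine Fintype.sum_equiv (Equiv.prodComm _ _) _ _ fun q => ?_
      obtain ⟨i, j⟩ := p; obtain ⟨k, l⟩ := q
      simp only [Equiv.prodComm_apply, Prod.swap_prod_mk]
      ring
    -- the v part equals conj of P a b x y
    have hvpart : star v ⬝ᵥ (((MA a x).map (starRingEnd ℂ) ⊗ₖ MA b y) *ᵥ v)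
        = star (star ψ ⬝ᵥ ((MA a x ⊗ₖ MB b y) *ᵥ ψ)) := by
      simp only [dotProduct, mulVec, kroneckerMap_apply, hconj, Matrix.map_apply, hv,
        Pi.star_apply, Finset.mul_sum, Complex.star_def, map_sum, _root_.map_mul,
        Complex.conj_conj]
    -- P a b x y is real
    have hreal : star (star ψ ⬝ᵥ ((MA a x ⊗ₖ MB b y) *ᵥ ψ))
        = star ψ ⬝ᵥ ((MA a x ⊗ₖ MB b y) *ᵥ ψ) := by
      have hMh' : ∀ i k, (starRingEnd ℂ) (MA a x k i) = MA a x i k := fun i k => hMh i k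
      have hNh' : ∀ j l, (starRingEnd ℂ) (MA b y l j) = MA b y j l := fun j l => hNh j l
      have hH : (MA a x ⊗ₖ MB b y)ᴴ = MA a x ⊗ₖ MB b y := by
        ext ⟨i, j⟩ ⟨k, l⟩
        simp only [conjTranspose_apply, kroneckerMap_apply, hconj, Matrix.map_apply,
          Complex.star_def, _root_.map_mul, Complex.conj_conj]
        rw [hMh' i k, ← hNh' l j]
      conv_lhs => rw [Matrix.star_dotProduct, star_star, Matrix.star_mulVec,
        ← Matrix.dotProduct_mulVec, hH]
    have : L ((MA a x).map (starRingEnd ℂ) ⊗ₖ MA b y) =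
        star v ⬝ᵥ (((MA a x).map (starRingEnd ℂ) ⊗ₖ MA b y) *ᵥ v)
        - star w ⬝ᵥ (((MA a x).map (starRingEnd ℂ) ⊗ₖ MA b y) *ᵥ w) := rfl
    rw [this, hwpart, hvpart, hreal, hsym a b x y, sub_self]
  -- Step 2: those products span everything
  have hS'span : Submodule.span ℂ S' = ⊤ := by
    rw [eq_top_iff]
    intro Z _
    have hZ : Z.map (starRingEnd ℂ) ∈ Submodule.span ℂ S := by rw [hspan]; trivial
    have := mapstar_mem_span S hZ
    have hZZ : (Z.map (starRingEnd ℂ)).map (starRingEnd ℂ) = Z := by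
      ext i j; simp [Matrix.map_apply]
    rwa [hZZ] at this
  have step2 : Submodule.span ℂ (Set.image2 (· ⊗ₖ ·) S' S) = ⊤ :=
    kron_span_top S' S hS'span hspan
  -- Step 3: L = 0
  have step3 : ∀ H, L H = 0 := by
    intro H
    have hmem : H ∈ Submodule.span ℂ (Set.image2 (· ⊗ₖ ·) S' S) := by rw [step2]; trivial
    have hle : Submodule.span ℂ (Set.image2 (· ⊗ₖ ·) S' S) ≤ LinearMap.ker L :=
      Submodule.span_le.mpr fun H hH => step1 H hH
    exact hle hmem
  -- Step 4: extract pointwise identity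
  have key : ∀ p q : Fin d × Fin d, star (v p) * v q = star (w p) * w q := by
    intro p q
    have := step3 (single p q 1)
    have hqf : ∀ u : (Fin d × Fin d) → ℂ, qf u (single p q 1) = star (u p) * u q := by
      intro u
      simp [qf, dotProduct, mulVec, Matrix.single, ite_and, Matrix.of_apply]
    rw [hL] at this
    simp only [LinearMap.sub_apply, hqf, sub_eq_zero] at this
    exact this
  have hnv : ∑ p, star (v p) * v p = 1 := by
    simpa [hv, dotProduct, mul_comm] using hψ
  have hnw : ∑ p, star (w p) * w p = 1 := by
    rw [← hψ]
    simp only [hw, dotProduct, Pi.star_apply]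
    exact Fintype.sum_equiv (Equiv.prodComm _ _) _ _ fun ⟨i,j⟩ => rfl
  set c : ℂ := ∑ p, star (v p) * w p with hc
  have hwv : ∀ q, w q = c * v q := by
    intro q
    calc w q = (∑ p, star (w p) * w p) * w q := by rw [hnw, one_mul]
    _ = ∑ p, w p * (star (w p) * w q) := by rw [Finset.sum_mul]; exact Finset.sum_congr rfl fun p _ => by ring
    _ = ∑ p, w p * (star (v p) * v q) := by
        exact Finset.sum_congr rfl fun p _ => by rw [← key]
    _ = (∑ p, star (v p) * w p) * v q := by rw [Finset.sum_mul]; exact Finset.sum_congr rfl fun p _ => by ring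
    _ = c * v q := rfl
  have habs : ‖c‖ = 1 := by
    have hcc : star c * c = 1 := by
      calc star c * c = star c * c * ∑ p, star (v p) * v p := by rw [hnv, mul_one]
      _ = ∑ p, star c * c * (star (v p) * v p) := Finset.mul_sum _ _ _
      _ = ∑ p, star (w p) * w p := Finset.sum_congr rfl fun p _ => by
          rw [hwv p, star_mul']; ring
      _ = 1 := hnw
    have h2 : Complex.normSq c = 1 := by
      rw [Complex.star_def, ← Complex.normSq_eq_conj_mul_self] at hcc
      exact_mod_cast hcc
    have := Complex.sq_norm c
    nlinarith [norm_nonneg c]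
  -- find θ
  set a := Complex.arg c with ha
  have harg : c = Complex.exp (a * Complex.I) := by
    have := Complex.norm_mul_exp_arg_mul_I c
    rw [habs] at this
    simpa using this.symm
  have hrange := Complex.arg_mem_Ioc c
  by_cases h0 : 0 ≤ a
  · refine ⟨a, ⟨h0, ?_⟩, fun i j => ?_⟩
    · have := hrange.2
      have hpi := Real.pi_pos
      linarith
    · have := hwv (i, j)
      rw [harg] at this
      exact this
  · refine ⟨a + 2 * Real.pi, ⟨by push_neg at h0; have := hrange.1; linarith [Real.pi_pos], by
      have := hrange.2; push_neg at h0; linarith [Real.pi_pos]⟩, fun i j => ?_⟩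
    have he : Complex.exp ((↑(a + 2 * Real.pi) : ℂ) * Complex.I) = Complex.exp (a * Complex.I) := by
      push_cast
      rw [add_mul, Complex.exp_add, Complex.exp_two_pi_mul_I, mul_one]
    rw [he, ← harg]
    exact hwv (i, j)
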